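/- Let X be a finite nonempty set, let Π and P be full-support probability distributions on X, and let β = max_{x∈X} Π(x)/P(x). Then E_{Y∼Π}[(1 − Π(Y)/P(Y))²] = 1 + ∑_{x∈X} Π(x)³/P(x)² − 2·∑_{x∈X} Π(x)²/P(x) ≤ β² − 1. -/

import Mathlib

open Finset

/-- With `β = max_x Pi x / P x`, one has
`E_{Y∼Pi}[(1 - Pi Y / P Y)²] = 1 + ∑_x Pi x³ / P x² - 2 ∑_x Pi x² / P x ≤ β² - 1`. -/
theorem inverse_ratio_second_moment {X : Type*} [Fintype X] [Nonempty X]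
    (Pi P : X → ℝ)
    (hPipos : ∀ x, 0 < Pi x) (hPisum : ∑ x, Pi x = 1)
    (hPpos : ∀ x, 0 < P x) (hPsum : ∑ x, P x = 1) :
    (∑ x, (1 - Pi x / P x) ^ 2 * Pi x
        = 1 + (∑ x, Pi x ^ 3 / P x ^ 2) - 2 * ∑ x, Pi x ^ 2 / P x) ∧
    ∑ x, (1 - Pi x / P x) ^ 2 * Pi x
        ≤ (univ.sup' univ_nonempty (fun x => Pi x / P x)) ^ 2 - 1 := by
  set β := univ.sup' univ_nonempty (fun x => Pi x / P x) with hβ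
  have hle : ∀ x, Pi x / P x ≤ β := fun x => le_sup' (fun x => Pi x / P x) (mem_univ x)
  have hexp : ∀ x, (1 - Pi x / P x) ^ 2 * Pi x
      = Pi x - 2 * (Pi x ^ 2 / P x) + Pi x ^ 3 / P x ^ 2 := by
    intro x
    have hP := (hPpos x).ne'
    field_simp
    ring
  have heq : ∑ x, (1 - Pi x / P x) ^ 2 * Pi x
      = 1 + (∑ x, Pi x ^ 3 / P x ^ 2) - 2 * ∑ x, Pi x ^ 2 / P x := by
    simp_rw [hexp]
    rw [Finset.sum_add_distrib, Finset.sum_sub_distrib, ← Finset.mul_sum, hPisum]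
    ring
  refine ⟨heq, ?_⟩
  -- β ≥ 1
  have hβ1 : 1 ≤ β := by
    calc (1 : ℝ) = ∑ x, Pi x := hPisum.symm
      _ ≤ ∑ x, β * P x := by
          apply Finset.sum_le_sum
          intro x _
          calc Pi x = (Pi x / P x) * P x := (div_mul_cancel₀ _ (hPpos x).ne').symm
            _ ≤ β * P x := mul_le_mul_of_nonneg_right (hle x) (hPpos x).le
      _ = β * ∑ x, P x := (Finset.mul_sum _ _ _).symm
      _ = β := by rw [hPsum, mul_one]
  -- S = ∑ Pi²/P
  set S := ∑ x, Pi x ^ 2 / P x with hS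
  have hS1 : 1 ≤ S := by
    have h := Finset.sq_sum_div_le_sum_sq_div univ Pi (fun i _ => hPpos i)
    rw [hPisum, hPsum] at h
    simpa using h
  have hSβ : S ≤ β := by
    calc S = ∑ x, (Pi x / P x) * Pi x := by
          apply Finset.sum_congr rfl; intro x _; rw [div_mul_eq_mul_div, ← sq]
      _ ≤ ∑ x, β * Pi x := by
          apply Finset.sum_le_sum
          intro x _
          exact mul_le_mul_of_nonneg_right (hle x) (hPipos x).le
      _ = β * ∑ x, Pi x := (Finset.mul_sum _ _ _).symm
      _ = β := by rw [hPisum, mul_one]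
  have hQ : ∑ x, Pi x ^ 3 / P x ^ 2 ≤ β * S := by
    rw [hS, Finset.mul_sum]
    apply Finset.sum_le_sum
    intro x _
    have hP := hPpos x
    have h1 : Pi x ^ 3 / P x ^ 2 = (Pi x / P x) * (Pi x ^ 2 / P x) := by
      field_simp
    rw [h1]
    exact mul_le_mul_of_nonneg_right (hle x) (by positivity)
  rw [heq]
  nlinarith [mul_le_mul_of_nonneg_left hSβ (by linarith : (0:ℝ) ≤ β - 1),
    mul_nonneg (by linarith : (0:ℝ) ≤ β - 1) (by linarith : (0:ℝ) ≤ S - 1)]
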